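/- Let φ be a conjunction of gap-order constraints over variables X ∪ {y} and a finite constant set Const ⊆ ℤ (a gap-order constraint has the form x − y ≥ k with x, y variables or constants and k ∈ ℕ). Then there exists a quantifier-free conjunction φ' of gap-order constraints over variables X such that φ' is logically equivalent to ∃y. φ. -/

import Mathlib

namespace GC

inductive GTerm (X : Type) where
  | var : X → GTerm X
  | const : ℤ → GTerm X

def GTerm.eval {X : Type} (α : X → ℤ) : GTerm X → ℤ
  | .var x => α x
  | .const c => c

def GTerm.constIn {X : Type} (S : Set ℤ) : GTerm X → Prop
  | .var _ => True
  | .const c => c ∈ S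

/-- A gap-order constraint `lhs - rhs ≥ gap` with `gap ∈ ℕ`. -/
structure GAtom (X : Type) where
  lhs : GTerm X
  rhs : GTerm X
  gap : ℕ

def GAtom.holds {X : Type} (α : X → ℤ) (a : GAtom X) : Prop :=
  a.lhs.eval α - a.rhs.eval α ≥ (a.gap : ℤ)

def GAtom.constIn {X : Type} (S : Set ℤ) (a : GAtom X) : Prop :=
  a.lhs.constIn S ∧ a.rhs.constIn S

/-- GC formulas: positive boolean combinations of gap-order constraints (and ⊤). -/
inductive GCF (X : Type) where
  | tru : GCF X
  | atom : GAtom X → GCF X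
  | and : GCF X → GCF X → GCF X
  | or : GCF X → GCF X → GCF X

def GCF.holds {X : Type} (α : X → ℤ) : GCF X → Prop
  | .tru => True
  | .atom a => a.holds α
  | .and f g => f.holds α ∧ g.holds α
  | .or f g => f.holds α ∨ g.holds α

def GCF.constIn {X : Type} (S : Set ℤ) : GCF X → Prop
  | .tru => True
  | .atom a => a.constIn S
  | .and f g => f.constIn S ∧ g.constIn S
  | .or f g => f.constIn S ∧ g.constIn S

/-- `K`-bounded approximation of a gap-order atom. -/
def GAtom.cutoff {X : Type} (K : ℕ) (a : GAtom X) : GAtom X :=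
  ⟨a.lhs, a.rhs, min a.gap K⟩

/-- `K`-bounded approximation: every atom `x - y ≥ k` with `k ≥ K` is
replaced by `x - y ≥ K`. -/
def GCF.cutoff {X : Type} (K : ℕ) : GCF X → GCF X
  | .tru => .tru
  | .atom a => .atom (a.cutoff K)
  | .and f g => .and (f.cutoff K) (g.cutoff K)
  | .or f g => .or (f.cutoff K) (g.cutoff K)

def conjHolds {X : Type} (α : X → ℤ) (φ : List (GAtom X)) : Prop :=
  ∀ a ∈ φ, a.holds α


variable {X : Type}

def down : GTerm (Option X) → GTerm X
  | .var (some x) => .var x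
  | .var none => .const 0
  | .const c => .const c

def isY : GTerm (Option X) → Bool
  | .var none => true
  | _ => false

lemma isY_eq_true {t : GTerm (Option X)} (h : isY t = true) : t = .var none := by
  cases t with
  | var x => cases x with
    | none => rfl
    | some x => simp [isY] at h
  | const c => simp [isY] at h

lemma down_eval (α : X → ℤ) (v : ℤ) (t : GTerm (Option X)) (h : isY t = false) :
    GTerm.eval α (down t) = GTerm.eval (fun x => Option.elim x v α) t := by
  cases t with
  | var x => cases x with
    | none => simp [isY] at h
    | some x => rfl
  | const c => rfl

def lowersOf (φ : List (GAtom (Option X))) : List (GTerm X × ℕ) :=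
  φ.filterMap fun a =>
    if isY a.lhs && !isY a.rhs then some (down a.rhs, a.gap) else none

def uppersOf (φ : List (GAtom (Option X))) : List (GTerm X × ℕ) :=
  φ.filterMap fun a =>
    if !isY a.lhs && isY a.rhs then some (down a.lhs, a.gap) else none

def freesOf (φ : List (GAtom (Option X))) : List (GAtom X) :=
  φ.filterMap fun a =>
    if !isY a.lhs && !isY a.rhs then some ⟨down a.lhs, down a.rhs, a.gap⟩ else none

def bad (φ : List (GAtom (Option X))) : Bool :=
  φ.any fun a => isY a.lhs && isY a.rhs && a.gap != 0

lemma foldr_min_le (b : ℤ) (L : List ℤ) : ∀ x ∈ L, L.foldr min b ≤ x := by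
  induction L with
  | nil => simp
  | cons a L ih =>
    intro x hx
    rcases List.mem_cons.1 hx with rfl | hx
    · exact min_le_left _ _
    · exact le_trans (min_le_right _ _) (ih x hx)

lemma foldr_min_le_init (b : ℤ) (L : List ℤ) : L.foldr min b ≤ b := by
  induction L with
  | nil => simp
  | cons a L ih => exact le_trans (min_le_right _ _) ih

lemma le_foldr_max (b : ℤ) (L : List ℤ) : ∀ x ∈ L, x ≤ L.foldr max b := by
  induction L with
  | nil => simp
  | cons a L ih =>
    intro x hx
    rcases List.mem_cons.1 hx with rfl | hx
    · exact le_max_left _ _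
    · exact le_trans (ih x hx) (le_max_right _ _)

lemma foldr_max_mem (b : ℤ) (L : List ℤ) : L.foldr max b = b ∨ L.foldr max b ∈ L := by
  induction L with
  | nil => simp
  | cons a L ih =>
    rcases max_choice a (L.foldr max b) with h | h
    · right; simp [h]
    · rcases ih with h' | h'
      · left; rw [List.foldr_cons, h, h']
      · right; simp only [List.foldr_cons, h]; exact List.mem_cons_of_mem _ h'

/-- Quantifier elimination for conjunctions of gap-order
constraints: for a conjunction `φ` of GCs over variables `X ∪ {y}` (the extra
variable `y` is `Option.none`) and constants from the finite set `Const`,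
there is a quantifier-free conjunction `φ'` of GCs over the variables `X`
that is logically equivalent to `∃ y. φ`. -/
theorem gc_conj_quantifier_elimination (X : Type) (Const : Finset ℤ)
    (φ : List (GAtom (Option X))) (hconst : ∀ a ∈ φ, a.constIn ↑Const) :
    ∃ φ' : List (GAtom X),
      ∀ α : X → ℤ,
        (∃ v : ℤ, conjHolds (fun x => Option.elim x v α) φ) ↔ conjHolds α φ' := by
  classical
  refine ⟨(if bad φ then [⟨.const 0, .const 0, 1⟩] else []) ++ freesOf φ ++
    ((lowersOf φ).flatMap fun p => (uppersOf φ).map fun q => ⟨q.1, p.1, p.2 + q.2⟩), ?_⟩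
  intro α
  constructor
  · rintro ⟨v, hv⟩
    have hbad : bad φ = false := by
      by_contra h
      rw [Bool.not_eq_false, bad, List.any_eq_true] at h
      obtain ⟨a, ha, hfa⟩ := h
      simp only [Bool.and_eq_true, bne_iff_ne, ne_eq] at hfa
      obtain ⟨⟨h1, h2⟩, h3⟩ := hfa
      have hh := hv a ha
      rw [GAtom.holds, isY_eq_true h1, isY_eq_true h2] at hh
      simp only [GTerm.eval] at hh
      omega
    intro b hb
    rw [List.mem_append, List.mem_append] at hb
    rcases hb with (hb | hb) | hb
    · rw [hbad] at hb; simp at hb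
    · rw [freesOf, List.mem_filterMap] at hb
      obtain ⟨a, ha, hsome⟩ := hb
      by_cases hc : (!isY a.lhs && !isY a.rhs) = true
      · rw [if_pos hc] at hsome
        obtain rfl := Option.some.inj hsome
        simp only [Bool.and_eq_true, Bool.not_eq_true'] at hc
        have hh := hv a ha
        rw [GAtom.holds] at hh ⊢
        simpa [down_eval α v _ hc.1, down_eval α v _ hc.2] using hh
      · rw [if_neg hc] at hsome; exact absurd hsome (by simp)
    · rw [List.mem_flatMap] at hb
      obtain ⟨p, hp, hb⟩ := hb
      rw [List.mem_map] at hb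
      obtain ⟨q, hq, rfl⟩ := hb
      rw [lowersOf, List.mem_filterMap] at hp
      obtain ⟨a1, ha1, hs1⟩ := hp
      by_cases hc1 : (isY a1.lhs && !isY a1.rhs) = true
      · rw [if_pos hc1] at hs1
        obtain rfl := Option.some.inj hs1
        simp only [Bool.and_eq_true, Bool.not_eq_true'] at hc1
        rw [uppersOf, List.mem_filterMap] at hq
        obtain ⟨a2, ha2, hs2⟩ := hq
        by_cases hc2 : (!isY a2.lhs && isY a2.rhs) = true
        · rw [if_pos hc2] at hs2
          obtain rfl := Option.some.inj hs2
          simp only [Bool.and_eq_true, Bool.not_eq_true'] at hc2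
          have h1 := hv a1 ha1
          have h2 := hv a2 ha2
          rw [GAtom.holds, isY_eq_true hc1.1] at h1
          rw [GAtom.holds, isY_eq_true hc2.2] at h2
          rw [← down_eval α v _ hc1.2] at h1
          rw [← down_eval α v _ hc2.1] at h2
          rw [GAtom.holds]
          simp only [GTerm.eval, Option.elim] at h1 h2 ⊢
          push_cast at h1 h2 ⊢
          omega
        · rw [if_neg hc2] at hs2; exact absurd hs2 (by simp)
      · rw [if_neg hc1] at hs1; exact absurd hs1 (by simp)
  · intro h
    have hbad : bad φ = false := by
      by_contra hb
      rw [Bool.not_eq_false] at hb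
      have := h ⟨.const 0, .const 0, 1⟩ (by simp [hb])
      simp [GAtom.holds, GTerm.eval] at this
    have hfree : ∀ b ∈ freesOf φ, b.holds α := fun b hb => h b (by simp [hb])
    have hpair : ∀ p ∈ lowersOf φ, ∀ q ∈ uppersOf φ,
        GTerm.eval α p.1 + (p.2 : ℤ) ≤ GTerm.eval α q.1 - q.2 := by
      intro p hp q hq
      have := h ⟨q.1, p.1, p.2 + q.2⟩ (by
        simp only [List.mem_append, List.mem_flatMap, List.mem_map]
        exact Or.inr ⟨p, hp, q, hq, rfl⟩)
      rw [GAtom.holds] at this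
      push_cast at this
      omega
    set L := (lowersOf φ).map (fun p => GTerm.eval α p.1 + (p.2 : ℤ)) with hL
    set U := (uppersOf φ).map (fun q => GTerm.eval α q.1 - (q.2 : ℤ)) with hU
    refine ⟨L.foldr max (U.foldr min 0), ?_⟩
    set v := L.foldr max (U.foldr min 0) with hv
    have hvL : ∀ p ∈ lowersOf φ, GTerm.eval α p.1 + (p.2 : ℤ) ≤ v :=
      fun p hp => le_foldr_max _ _ _ (List.mem_map_of_mem hp)
    have hvU : ∀ q ∈ uppersOf φ, v ≤ GTerm.eval α q.1 - (q.2 : ℤ) := by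
      intro q hq
      rcases foldr_max_mem (U.foldr min 0) L with hm | hm
      · rw [hv, hm]
        exact foldr_min_le _ _ _ (List.mem_map_of_mem hq)
      · rw [hL, List.mem_map] at hm
        obtain ⟨p, hp, hpv⟩ := hm
        rw [hv, ← hpv]
        exact hpair p hp q hq
    intro a ha
    by_cases h1 : isY a.lhs = true <;> by_cases h2 : isY a.rhs = true
    · have hk : a.gap = 0 := by
        rw [bad, List.any_eq_false] at hbad
        have := hbad a ha
        simpa [h1, h2] using this
      rw [GAtom.holds, isY_eq_true h1, isY_eq_true h2, hk]
      simp [GTerm.eval]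
    · rw [Bool.not_eq_true] at h2
      have hp : (down a.rhs, a.gap) ∈ lowersOf φ := by
        rw [lowersOf, List.mem_filterMap]
        exact ⟨a, ha, by rw [if_pos (by simp [h1, h2])]⟩
      have := hvL _ hp
      rw [GAtom.holds, isY_eq_true h1, ← down_eval α v _ h2]
      simp only [GTerm.eval, Option.elim] at this ⊢
      omega
    · rw [Bool.not_eq_true] at h1
      have hq : (down a.lhs, a.gap) ∈ uppersOf φ := by
        rw [uppersOf, List.mem_filterMap]
        exact ⟨a, ha, by rw [if_pos (by simp [h1, h2])]⟩
      have := hvU _ hq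
      rw [GAtom.holds, isY_eq_true h2, ← down_eval α v _ h1]
      simp only [GTerm.eval, Option.elim] at this ⊢
      omega
    · rw [Bool.not_eq_true] at h1 h2
      have hb : (⟨down a.lhs, down a.rhs, a.gap⟩ : GAtom X) ∈ freesOf φ := by
        rw [freesOf, List.mem_filterMap]
        exact ⟨a, ha, by rw [if_pos (by simp [h1, h2])]⟩
      have := hfree _ hb
      rw [GAtom.holds] at this ⊢
      simpa [down_eval α v _ h1, down_eval α v _ h2] using this


end GC
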